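/- Let Γ be a bichromatic graph that is locally like W(F4), and let x_1, x_2, x_3, x_4 be four pairwise adjacent short vertices of Γ. Then the set of long vertices adjacent to at least one of x_1, x_2, x_3, x_4 has exactly 12 elements. Moreover, if {i,j} and {k,l} are distinct 2-element subsets of {1,2,3,4} with {i,j} ∩ {k,l} ≠ ∅, if y is a long vertex adjacent to both x_i and x_j, and y' is a long vertex adjacent to both x_k and x_l, then y and y' are not adjacent. -/

import Mathlib

/-- The Weyl graph of type `Bₙ`: vertices `y_{i,j}`, `1 ≤ i,j ≤ n`; distinct vertices
`y_{i,j}`, `y_{k,l}` are adjacent iff `{i,j} ∩ {k,l} = ∅` or `(k,l) = (j,i)`. -/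
def WB (n : ℕ) : SimpleGraph (Fin n × Fin n) where
  Adj p q :=
    p ≠ q ∧ (({p.1, p.2} : Set (Fin n)) ∩ {q.1, q.2} = ∅ ∨ (q.1 = p.2 ∧ q.2 = p.1))
  symm := by
    constructor
    rintro ⟨a, b⟩ ⟨c, d⟩ ⟨hne, h⟩
    refine ⟨hne.symm, ?_⟩
    rcases h with h | ⟨h1, h2⟩
    · left; rw [Set.inter_comm] at h; exact h
    · right; exact ⟨h2.symm, h1.symm⟩
  loopless := by constructor; rintro ⟨a, b⟩ ⟨hne, _⟩; exact hne rfl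

/-- The coloring of `W(Bₙ)`: `y_{i,i}` is short (`true`), `y_{i,j}` with `i ≠ j` is long. -/
def WBcolor (n : ℕ) (p : Fin n × Fin n) : Bool := decide (p.1 = p.2)

/-- The coloring of `W(Cₙ)`: obtained from `W(Bₙ)` by exchanging short and long vertices. -/
def WCcolor (n : ℕ) (p : Fin n × Fin n) : Bool := !(WBcolor n p)

/-- Isomorphism of bichromatic graphs: a graph isomorphism preserving vertex types
(`true` = short, `false` = long). -/
def BIso {V : Type*} {W : Type*} (G : SimpleGraph V) (cG : V → Bool)
    (H : SimpleGraph W) (cH : W → Bool) : Prop :=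
  ∃ e : G ≃g H, ∀ v : V, cH (e v) = cG v

/-- A bichromatic graph is locally like `W(F₄)` if the local graph at every short vertex
is isomorphic to `W(B₃)` and the local graph at every long vertex is isomorphic to `W(C₃)`. -/
def LocallyLikeWF4 {V : Type*} (G : SimpleGraph V) (c : V → Bool) : Prop :=
  ∀ v : V,
    (c v = true → BIso (G.induce (G.neighborSet v)) (fun x => c x.1) (WB 3) (WBcolor 3)) ∧
    (c v = false → BIso (G.induce (G.neighborSet v)) (fun x => c x.1) (WB 3) (WCcolor 3))

/-! ### Auxiliary facts about `W(B₃)` -/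

lemma pair_inter_empty' {α : Type*} (a b c d : α) :
    ({a, b} : Set α) ∩ {c, d} = ∅ ↔ (a ≠ c ∧ a ≠ d) ∧ b ≠ c ∧ b ≠ d := by
  simp [Set.eq_empty_iff_forall_notMem]

lemma WB_adj_iff' {n : ℕ} (p q : Fin n × Fin n) :
    (WB n).Adj p q ↔ p ≠ q ∧ (((p.1 ≠ q.1 ∧ p.1 ≠ q.2) ∧ p.2 ≠ q.1 ∧ p.2 ≠ q.2) ∨
      (q.1 = p.2 ∧ q.2 = p.1)) := by
  change (p ≠ q ∧ (({p.1, p.2} : Set (Fin n)) ∩ {q.1, q.2} = ∅ ∨ _)) ↔ _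
  rw [pair_inter_empty']

instance {n : ℕ} : DecidableRel (WB n).Adj := fun p q =>
  decidable_of_iff' _ (WB_adj_iff' p q)

lemma WB3_triple : ∀ s1 s2 q : Fin 3 × Fin 3, s1.1 = s1.2 → s2.1 = s2.2 → s1 ≠ s2 →
    q.1 ≠ q.2 → (WB 3).Adj s1 q → (WB 3).Adj s2 q → False := by decide

lemma WB3_nonadj : ∀ s1 s2 q q' : Fin 3 × Fin 3, s1.1 = s1.2 → s2.1 = s2.2 → s1 ≠ s2 →
    q.1 ≠ q.2 → q'.1 ≠ q'.2 → (WB 3).Adj s1 q → (WB 3).Adj s2 q' →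
    ¬ (WB 3).Adj q q' := by decide

lemma WB3_pair : ∀ s : Fin 3 × Fin 3, s.1 = s.2 → ∃ q1 q2 : Fin 3 × Fin 3, q1 ≠ q2 ∧
    ∀ q, (q.1 ≠ q.2 ∧ (WB 3).Adj s q) ↔ (q = q1 ∨ q = q2) := by decide

set_option synthInstance.maxSize 400 in
lemma WB3_second : ∀ s1 s2 s3 q : Fin 3 × Fin 3, s1.1 = s1.2 → s2.1 = s2.2 → s3.1 = s3.2 →
    s1 ≠ s2 → s1 ≠ s3 → s2 ≠ s3 → q.1 ≠ q.2 →
    (WB 3).Adj s1 q ∨ (WB 3).Adj s2 q ∨ (WB 3).Adj s3 q := by decide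

/-! ### Auxiliary facts at the level of the ambient graph -/

section aux
variable {V : Type} {G : SimpleGraph V} {c : V → Bool}

lemma short_image {v : V} (e : G.induce (G.neighborSet v) ≃g WB 3)
    (he : ∀ z, WBcolor 3 (e z) = c z.1) (z : G.neighborSet v) (h : c z.1 = true) :
    (e z).1 = (e z).2 := by
  have := (he z).trans h
  simpa [WBcolor] using this

lemma long_image {v : V} (e : G.induce (G.neighborSet v) ≃g WB 3)
    (he : ∀ z, WBcolor 3 (e z) = c z.1) (z : G.neighborSet v) (h : c z.1 = false) :
    (e z).1 ≠ (e z).2 := by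
  have := (he z).trans h
  simpa [WBcolor] using this

lemma aux_triple (hloc : LocallyLikeWF4 G c) {v u1 u2 y : V} (hv : c v = true)
    (hu : u1 ≠ u2) (h1 : c u1 = true) (h2 : c u2 = true)
    (a1 : G.Adj v u1) (a2 : G.Adj v u2)
    (hy : c y = false) (ay : G.Adj v y) (b1 : G.Adj u1 y) (b2 : G.Adj u2 y) : False := by
  obtain ⟨e, he⟩ := (hloc v).1 hv
  set U1 : G.neighborSet v := ⟨u1, a1⟩
  set U2 : G.neighborSet v := ⟨u2, a2⟩
  set Y : G.neighborSet v := ⟨y, ay⟩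
  refine WB3_triple (e U1) (e U2) (e Y) (short_image e he U1 h1) (short_image e he U2 h2)
    ?_ (long_image e he Y hy) (e.map_adj_iff.mpr b1) (e.map_adj_iff.mpr b2)
  intro h
  exact hu (congrArg Subtype.val (e.toEquiv.injective h))

lemma aux_nonadj (hloc : LocallyLikeWF4 G c) {v u1 u2 y y' : V} (hv : c v = true)
    (hu : u1 ≠ u2) (h1 : c u1 = true) (h2 : c u2 = true)
    (a1 : G.Adj v u1) (a2 : G.Adj v u2)
    (hy : c y = false) (ay : G.Adj v y) (b1 : G.Adj u1 y)
    (hy' : c y' = false) (ay' : G.Adj v y') (b2 : G.Adj u2 y') : ¬ G.Adj y y' := by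
  obtain ⟨e, he⟩ := (hloc v).1 hv
  set U1 : G.neighborSet v := ⟨u1, a1⟩
  set U2 : G.neighborSet v := ⟨u2, a2⟩
  set Y : G.neighborSet v := ⟨y, ay⟩
  set Y' : G.neighborSet v := ⟨y', ay'⟩
  intro hadj
  refine WB3_nonadj (e U1) (e U2) (e Y) (e Y') (short_image e he U1 h1)
    (short_image e he U2 h2) ?_ (long_image e he Y hy) (long_image e he Y' hy')
    (e.map_adj_iff.mpr b1) (e.map_adj_iff.mpr b2) (e.map_adj_iff.mpr hadj)
  intro h
  exact hu (congrArg Subtype.val (e.toEquiv.injective h))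

lemma aux_pair (hloc : LocallyLikeWF4 G c) {v u : V} (hv : c v = true) (hu : c u = true)
    (a : G.Adj v u) :
    ∃ y1 y2 : V, y1 ≠ y2 ∧ {y : V | c y = false ∧ G.Adj v y ∧ G.Adj u y} = {y1, y2} := by
  obtain ⟨e, he⟩ := (hloc v).1 hv
  set U : G.neighborSet v := ⟨u, a⟩
  obtain ⟨q1, q2, hq, hiff⟩ := WB3_pair (e U) (short_image e he U hu)
  have key : ∀ q : Fin 3 × Fin 3,
      c (e.symm q).1 = false ∧ G.Adj v (e.symm q).1 ∧ G.Adj u (e.symm q).1 ↔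
      (q = q1 ∨ q = q2) := by
    intro q
    rw [← hiff q]
    constructor
    · rintro ⟨hc, -, hadju⟩
      have h1 : (e (e.symm q)).1 ≠ (e (e.symm q)).2 := long_image e he (e.symm q) hc
      rw [e.apply_symm_apply] at h1
      have h2 : (WB 3).Adj (e U) (e (e.symm q)) := e.map_adj_iff.mpr hadju
      rw [e.apply_symm_apply] at h2
      exact ⟨h1, h2⟩
    · rintro ⟨hlong, hadj⟩
      have hc : WBcolor 3 (e (e.symm q)) = c (e.symm q).1 := he (e.symm q)
      rw [e.apply_symm_apply] at hc
      have hcf : c (e.symm q).1 = false := by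
        rw [← hc]; simp [WBcolor, hlong]
      have hadj' : (WB 3).Adj (e U) (e (e.symm q)) := by
        rwa [e.apply_symm_apply]
      exact ⟨hcf, (e.symm q).2, e.map_adj_iff.mp hadj'⟩
  refine ⟨(e.symm q1).1, (e.symm q2).1, ?_, ?_⟩
  · intro h
    exact hq (e.symm.toEquiv.injective (Subtype.ext h))
  · ext y
    simp only [Set.mem_setOf_eq, Set.mem_insert_iff, Set.mem_singleton_iff]
    constructor
    · rintro ⟨hc, hv1, hu1⟩
      set Y : G.neighborSet v := ⟨y, hv1⟩
      have : (e Y).1 ≠ (e Y).2 ∧ (WB 3).Adj (e U) (e Y) :=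
        ⟨long_image e he Y hc, e.map_adj_iff.mpr hu1⟩
      rcases (hiff (e Y)).mp this with h | h
      · left
        have : Y = e.symm q1 := by rw [← h, e.symm_apply_apply]
        exact congrArg Subtype.val this
      · right
        have : Y = e.symm q2 := by rw [← h, e.symm_apply_apply]
        exact congrArg Subtype.val this
    · rintro (rfl | rfl)
      · exact (key q1).mpr (Or.inl rfl)
      · exact (key q2).mpr (Or.inr rfl)

lemma aux_second (hloc : LocallyLikeWF4 G c) {v u1 u2 u3 y : V} (hv : c v = true)
    (h1 : c u1 = true) (h2 : c u2 = true) (h3 : c u3 = true)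
    (d12 : u1 ≠ u2) (d13 : u1 ≠ u3) (d23 : u2 ≠ u3)
    (a1 : G.Adj v u1) (a2 : G.Adj v u2) (a3 : G.Adj v u3)
    (hy : c y = false) (ay : G.Adj v y) :
    G.Adj u1 y ∨ G.Adj u2 y ∨ G.Adj u3 y := by
  obtain ⟨e, he⟩ := (hloc v).1 hv
  set U1 : G.neighborSet v := ⟨u1, a1⟩
  set U2 : G.neighborSet v := ⟨u2, a2⟩
  set U3 : G.neighborSet v := ⟨u3, a3⟩
  set Y : G.neighborSet v := ⟨y, ay⟩
  have inj : ∀ (a b : G.neighborSet v), a.1 ≠ b.1 → e a ≠ e b := by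
    intro a b hab h
    exact hab (congrArg Subtype.val (e.toEquiv.injective h))
  rcases WB3_second (e U1) (e U2) (e U3) (e Y) (short_image e he U1 h1)
      (short_image e he U2 h2) (short_image e he U3 h3)
      (inj U1 U2 d12) (inj U1 U3 d13) (inj U2 U3 d23) (long_image e he Y hy) with
    h | h | h
  · exact Or.inl (e.map_adj_iff.mp h)
  · exact Or.inr (Or.inl (e.map_adj_iff.mp h))
  · exact Or.inr (Or.inr (e.map_adj_iff.mp h))

end aux

theorem twelve_long_neighbors_of_short_clique {V : Type} (G : SimpleGraph V) (c : V → Bool)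
    (hloc : LocallyLikeWF4 G c) (x : Fin 4 → V)
    (hshort : ∀ i, c (x i) = true)
    (hadj : ∀ i j, i ≠ j → G.Adj (x i) (x j)) :
    {y : V | c y = false ∧ ∃ i, G.Adj (x i) y}.ncard = 12 ∧
    ∀ i j k l : Fin 4, i ≠ j → k ≠ l →
      ({i, j} : Finset (Fin 4)) ≠ {k, l} → (({i, j} : Finset (Fin 4)) ∩ {k, l}).Nonempty →
      ∀ y y' : V, c y = false → G.Adj (x i) y → G.Adj (x j) y →
        c y' = false → G.Adj (x k) y' → G.Adj (x l) y' → ¬ G.Adj y y' := by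
  -- T i j : long common neighbors of x i and x j
  set T : Fin 4 → Fin 4 → Set V :=
    fun i j => {y : V | c y = false ∧ G.Adj (x i) y ∧ G.Adj (x j) y} with hT
  have hTpair : ∀ i j : Fin 4, i ≠ j → ∃ y1 y2 : V, y1 ≠ y2 ∧ T i j = {y1, y2} := by
    intro i j hij
    exact aux_pair hloc (hshort i) (hshort j) (hadj i j hij)
  have hTcard : ∀ i j : Fin 4, i ≠ j → (T i j).ncard = 2 := by
    intro i j hij
    obtain ⟨y1, y2, hne, hset⟩ := hTpair i j hij
    rw [hset, Set.ncard_pair hne]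
  have hTfin : ∀ i j : Fin 4, i ≠ j → (T i j).Finite := by
    intro i j hij
    obtain ⟨y1, y2, -, hset⟩ := hTpair i j hij
    rw [hset]
    exact (Set.finite_singleton y2).insert y1
  have no3 : ∀ p q r : Fin 4, p ≠ q → p ≠ r → q ≠ r → ∀ y, c y = false →
      G.Adj (x p) y → G.Adj (x q) y → G.Adj (x r) y → False := by
    intro p q r hpq hpr hqr y hy h1 h2 h3
    exact aux_triple hloc (hshort p) (fun h => (hadj q r hqr).ne h) (hshort q) (hshort r)
      (hadj p q hpq) (hadj p r hpr) hy h1 h2 h3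
  -- coverage
  have hcover : {y : V | c y = false ∧ ∃ i, G.Adj (x i) y} =
      T 0 1 ∪ (T 0 2 ∪ (T 0 3 ∪ (T 1 2 ∪ (T 1 3 ∪ T 2 3)))) := by
    ext y
    simp only [hT, Set.mem_union, Set.mem_setOf_eq]
    constructor
    · rintro ⟨hc, i, hi⟩
      have sec : ∀ a b d : Fin 4, i ≠ a → i ≠ b → i ≠ d → a ≠ b → a ≠ d → b ≠ d →
          G.Adj (x a) y ∨ G.Adj (x b) y ∨ G.Adj (x d) y := by
        intro a b d hia hib hid hab had hbd
        exact aux_second hloc (hshort i) (hshort a) (hshort b) (hshort d)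
          (hadj a b hab).ne (hadj a d had).ne (hadj b d hbd).ne
          (hadj i a hia) (hadj i b hib) (hadj i d hid) hc hi
      fin_cases i
      · rcases sec 1 2 3 (by decide) (by decide) (by decide) (by decide) (by decide)
          (by decide) with h | h | h <;> tauto
      · rcases sec 0 2 3 (by decide) (by decide) (by decide) (by decide) (by decide)
          (by decide) with h | h | h <;> tauto
      · rcases sec 0 1 3 (by decide) (by decide) (by decide) (by decide) (by decide)
          (by decide) with h | h | h <;> tauto
      · rcases sec 0 1 2 (by decide) (by decide) (by decide) (by decide) (by decide)
          (by decide) with h | h | h <;> tauto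
    · rintro (⟨hc, h1, h2⟩ | ⟨hc, h1, h2⟩ | ⟨hc, h1, h2⟩ | ⟨hc, h1, h2⟩ | ⟨hc, h1, h2⟩ |
        ⟨hc, h1, h2⟩) <;> exact ⟨hc, _, h1⟩
  constructor
  · rw [hcover]
    -- disjointness facts
    have d1 : Disjoint (T 0 1) (T 0 2) := Set.disjoint_left.mpr fun y h1 h2 =>
      no3 0 1 2 (by decide) (by decide) (by decide) y h1.1 h1.2.1 h1.2.2 h2.2.2
    have d2 : Disjoint (T 0 1) (T 0 3) := Set.disjoint_left.mpr fun y h1 h2 =>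
      no3 0 1 3 (by decide) (by decide) (by decide) y h1.1 h1.2.1 h1.2.2 h2.2.2
    have d3 : Disjoint (T 0 1) (T 1 2) := Set.disjoint_left.mpr fun y h1 h2 =>
      no3 0 1 2 (by decide) (by decide) (by decide) y h1.1 h1.2.1 h1.2.2 h2.2.2
    have d4 : Disjoint (T 0 1) (T 1 3) := Set.disjoint_left.mpr fun y h1 h2 =>
      no3 0 1 3 (by decide) (by decide) (by decide) y h1.1 h1.2.1 h1.2.2 h2.2.2
    have d5 : Disjoint (T 0 1) (T 2 3) := Set.disjoint_left.mpr fun y h1 h2 =>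
      no3 0 2 3 (by decide) (by decide) (by decide) y h1.1 h1.2.1 h2.2.1 h2.2.2
    have d6 : Disjoint (T 0 2) (T 0 3) := Set.disjoint_left.mpr fun y h1 h2 =>
      no3 0 2 3 (by decide) (by decide) (by decide) y h1.1 h1.2.1 h1.2.2 h2.2.2
    have d7 : Disjoint (T 0 2) (T 1 2) := Set.disjoint_left.mpr fun y h1 h2 =>
      no3 0 2 1 (by decide) (by decide) (by decide) y h1.1 h1.2.1 h1.2.2 h2.2.1
    have d8 : Disjoint (T 0 2) (T 1 3) := Set.disjoint_left.mpr fun y h1 h2 =>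
      no3 0 2 1 (by decide) (by decide) (by decide) y h1.1 h1.2.1 h1.2.2 h2.2.1
    have d9 : Disjoint (T 0 2) (T 2 3) := Set.disjoint_left.mpr fun y h1 h2 =>
      no3 0 2 3 (by decide) (by decide) (by decide) y h1.1 h1.2.1 h1.2.2 h2.2.2
    have d10 : Disjoint (T 0 3) (T 1 2) := Set.disjoint_left.mpr fun y h1 h2 =>
      no3 0 3 1 (by decide) (by decide) (by decide) y h1.1 h1.2.1 h1.2.2 h2.2.1
    have d11 : Disjoint (T 0 3) (T 1 3) := Set.disjoint_left.mpr fun y h1 h2 =>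
      no3 0 3 1 (by decide) (by decide) (by decide) y h1.1 h1.2.1 h1.2.2 h2.2.1
    have d12 : Disjoint (T 0 3) (T 2 3) := Set.disjoint_left.mpr fun y h1 h2 =>
      no3 0 3 2 (by decide) (by decide) (by decide) y h1.1 h1.2.1 h1.2.2 h2.2.1
    have d13 : Disjoint (T 1 2) (T 1 3) := Set.disjoint_left.mpr fun y h1 h2 =>
      no3 1 2 3 (by decide) (by decide) (by decide) y h1.1 h1.2.1 h1.2.2 h2.2.2
    have d14 : Disjoint (T 1 2) (T 2 3) := Set.disjoint_left.mpr fun y h1 h2 =>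
      no3 1 2 3 (by decide) (by decide) (by decide) y h1.1 h1.2.1 h1.2.2 h2.2.2
    have d15 : Disjoint (T 1 3) (T 2 3) := Set.disjoint_left.mpr fun y h1 h2 =>
      no3 1 3 2 (by decide) (by decide) (by decide) y h1.1 h1.2.1 h1.2.2 h2.2.1
    have f01 := hTfin 0 1 (by decide)
    have f02 := hTfin 0 2 (by decide)
    have f03 := hTfin 0 3 (by decide)
    have f12 := hTfin 1 2 (by decide)
    have f13 := hTfin 1 3 (by decide)
    have f23 := hTfin 2 3 (by decide)
    rw [Set.ncard_union_eq (by
        refine Set.disjoint_union_right.mpr ⟨d1, ?_⟩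
        refine Set.disjoint_union_right.mpr ⟨d2, ?_⟩
        refine Set.disjoint_union_right.mpr ⟨d3, ?_⟩
        exact Set.disjoint_union_right.mpr ⟨d4, d5⟩)
      f01 (f02.union (f03.union (f12.union (f13.union f23)))),
      Set.ncard_union_eq (by
        refine Set.disjoint_union_right.mpr ⟨d6, ?_⟩
        refine Set.disjoint_union_right.mpr ⟨d7, ?_⟩
        exact Set.disjoint_union_right.mpr ⟨d8, d9⟩)
      f02 (f03.union (f12.union (f13.union f23))),
      Set.ncard_union_eq (by
        refine Set.disjoint_union_right.mpr ⟨d10, ?_⟩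
        exact Set.disjoint_union_right.mpr ⟨d11, d12⟩)
      f03 (f12.union (f13.union f23)),
      Set.ncard_union_eq (Set.disjoint_union_right.mpr ⟨d13, d14⟩)
      f12 (f13.union f23),
      Set.ncard_union_eq d15 f13 f23,
      hTcard 0 1 (by decide), hTcard 0 2 (by decide), hTcard 0 3 (by decide),
      hTcard 1 2 (by decide), hTcard 1 3 (by decide), hTcard 2 3 (by decide)]
  · intro i j k l hij hkl hne hinter y y' hy ai aj hy' ak al
    obtain ⟨m, hm⟩ := hinter
    rw [Finset.mem_inter, Finset.mem_insert, Finset.mem_insert,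
      Finset.mem_singleton, Finset.mem_singleton] at hm
    obtain ⟨hm1, hm2⟩ := hm
    have core : ∀ a b : Fin 4, x a ≠ x b → G.Adj (x m) y → G.Adj (x a) y →
        G.Adj (x m) y' → G.Adj (x b) y' → m ≠ a → m ≠ b → ¬ G.Adj y y' := by
      intro a b hab h1 h2 h3 h4 hma hmb
      exact aux_nonadj hloc (hshort m) hab (hshort a) (hshort b)
        (hadj m a hma) (hadj m b hmb) hy h1 h2 hy' h3 h4
    rcases hm1 with hmi | hmj <;> rcases hm2 with hmk | hml
    · -- m = i, m = k
      have hjl : j ≠ l := by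
        rintro rfl
        exact hne (by rw [hmi.symm.trans hmk])
      exact core j l (fun h => (hadj j l hjl).ne h) (by rw [hmi]; exact ai) aj
        (by rw [hmk]; exact ak) al (by rw [hmi]; exact hij) (by rw [hmk]; exact hkl)
    · -- m = i, m = l
      have hjk : j ≠ k := by
        rintro rfl
        exact hne (by rw [hmi.symm.trans hml, Finset.pair_comm])
      exact core j k (fun h => (hadj j k hjk).ne h) (by rw [hmi]; exact ai) aj
        (by rw [hml]; exact al) ak (by rw [hmi]; exact hij)
        (by rw [hml]; exact (Ne.symm hkl))
    · -- m = j, m = k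
      have hil : i ≠ l := by
        rintro rfl
        exact hne (by rw [hmj.symm.trans hmk, Finset.pair_comm])
      exact core i l (fun h => (hadj i l hil).ne h) (by rw [hmj]; exact aj) ai
        (by rw [hmk]; exact ak) al (by rw [hmj]; exact (Ne.symm hij))
        (by rw [hmk]; exact hkl)
    · -- m = j, m = l
      have hik : i ≠ k := by
        rintro rfl
        exact hne (by rw [hmj.symm.trans hml])
      exact core i k (fun h => (hadj i k hik).ne h) (by rw [hmj]; exact aj) ai
        (by rw [hml]; exact al) ak (by rw [hmj]; exact (Ne.symm hij))
        (by rw [hml]; exact (Ne.symm hkl))
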